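/- arXiv:2007.14483 — 2 statements merged into one kernel-verified Lean document; each statement's English description precedes it below -/
import Mathlib

section
/- In a commutative idempotent involutive residuated lattice, the family of intervals {B_x | x ∈ A} partitions the underlying set: every x belongs to B_x, and if y ∈ B_x then B_y = B_x. -/
/-- A commutative idempotent involutive residuated lattice. -/
class CIdInRL (α : Type*) extends Lattice α, CommMonoid α, Zero α where
  arrow : α → α → α
  residuation : ∀ x y z : α, x * y ≤ z ↔ y ≤ arrow x z
  idem : ∀ x : α, x * x = x
  involutive : ∀ x : α, arrow (arrow x 0) 0 = x

namespace CIdInRL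
variable {α : Type*} [CIdInRL α]
/-- linear negation ¬x := x → 0 -/
def neg (x : α) : α := arrow x 0
/-- 0_x := x ∧ ¬x -/
def zx (x : α) : α := x ⊓ neg x
/-- 1_x := x ∨ ¬x -/
def ox (x : α) : α := x ⊔ neg x
/-- monoidal order x ⊑ y iff x·y = x -/
def mleq (x y : α) : Prop := x * y = x
end CIdInRL

namespace CIdInRL
variable {α : Type*} [CIdInRL α]

lemma cneg_neg (x : α) : neg (neg x) = x := involutive x

lemma cmul_mono_right {a b : α} (c : α) (h : a ≤ b) : c * a ≤ c * b := by
  have h1 : b ≤ arrow c (c * b) := (residuation c b (c * b)).mp le_rfl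
  exact (residuation c a (c * b)).mpr (le_trans h h1)

lemma cmul_mono_left {a b : α} (h : a ≤ b) (c : α) : a * c ≤ b * c := by
  rw [mul_comm a c, mul_comm b c]; exact cmul_mono_right c h

lemma cmul_neg_le (x : α) : x * neg x ≤ 0 :=
  (residuation x (neg x) 0).mpr le_rfl

lemma cneg_anti {a b : α} (h : a ≤ b) : neg b ≤ neg a := by
  have h1 : a * neg b ≤ 0 := le_trans (cmul_mono_left h (neg b)) (cmul_neg_le b)
  exact (residuation a (neg b) 0).mp h1

lemma cle_iff_neg {a b : α} : a ≤ b ↔ a * neg b ≤ 0 := by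
  constructor
  · intro h
    exact le_trans (cmul_mono_left h (neg b)) (cmul_neg_le b)
  · intro h
    have h1 : neg b ≤ neg a := (residuation a (neg b) 0).mp h
    have h2 := cneg_anti h1
    rwa [cneg_neg, cneg_neg] at h2

/-- x·¬x = x ⊓ ¬x -/
lemma cmul_neg_self (x : α) : x * neg x = zx x := by
  apply le_antisymm
  · apply le_inf
    · rw [cle_iff_neg, mul_assoc, idem]
      exact cmul_neg_le x
    · rw [cle_iff_neg, cneg_neg, mul_right_comm, idem]
      exact cmul_neg_le x
  · calc zx x = zx x * zx x := (idem _).symm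
      _ ≤ x * neg x :=
        le_trans (cmul_mono_left inf_le_left _) (cmul_mono_right _ inf_le_right)

lemma cneg_sup (a b : α) : neg (a ⊔ b) = neg a ⊓ neg b := by
  apply le_antisymm
  · exact le_inf (cneg_anti le_sup_left) (cneg_anti le_sup_right)
  · rw [show neg (a ⊔ b) = arrow (a ⊔ b) 0 from rfl]
    refine (residuation (a ⊔ b) (neg a ⊓ neg b) 0).mp ?_
    rw [mul_comm]
    refine (residuation (neg a ⊓ neg b) (a ⊔ b) 0).mpr (sup_le ?_ ?_)
    · refine (residuation (neg a ⊓ neg b) a 0).mp ?_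
      exact le_trans (cmul_mono_left inf_le_left a) (by rw [mul_comm]; exact cmul_neg_le a)
    · refine (residuation (neg a ⊓ neg b) b 0).mp ?_
      exact le_trans (cmul_mono_left inf_le_right b) (by rw [mul_comm]; exact cmul_neg_le b)

lemma cneg_zx (x : α) : neg (zx x) = ox x := by
  have h : neg (neg x ⊔ x) = zx x := by
    simp [cneg_sup, cneg_neg, zx, inf_comm]
  rw [← h, cneg_neg, ox, sup_comm]

lemma cneg_ox (x : α) : neg (ox x) = zx x := by
  rw [← cneg_zx, cneg_neg]

lemma czx_le_zero (x : α) : zx x ≤ (0 : α) := by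
  rw [← cmul_neg_self]; exact cmul_neg_le x

/-- 0_x ⊑ x -/
lemma czx_mleq (x : α) : mleq (zx x) x := by
  show zx x * x = zx x
  rw [← cmul_neg_self, mul_right_comm, idem]

/-- x ⊑ 1_x -/
lemma cmleq_ox (x : α) : mleq x (ox x) := by
  show x * ox x = x
  apply le_antisymm
  · refine (residuation x (ox x) x).mpr (sup_le ?_ ?_)
    · exact (residuation x x x).mp (le_of_eq (idem x))
    · refine (residuation x (neg x) x).mp ?_
      rw [cmul_neg_self]; exact le_trans inf_le_left le_rfl
  · calc x = x * x := (idem x).symm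
      _ ≤ x * ox x := cmul_mono_right x le_sup_left

/-- main lemma: y ∈ B_x implies 0_y = 0_x -/
lemma czx_eq {x y : α} (h1 : zx x * y = zx x) (h2 : y * ox x = y) :
    zx y = zx x := by
  -- lattice bounds
  have hzero : zx x * neg y ≤ 0 := by
    calc zx x * neg y = zx x * (y * neg y) := by rw [← mul_assoc, h1]
      _ ≤ 0 * 0 := le_trans (cmul_mono_left (czx_le_zero x) _)
            (cmul_mono_right 0 (cmul_neg_le y))
      _ = 0 := idem 0
  have h0y : zx x ≤ y := cle_iff_neg.mpr hzero
  have hy1 : y ≤ ox x := by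
    rw [cle_iff_neg, cneg_ox, mul_comm, h1]; exact czx_le_zero x
  have h0ny : zx x ≤ neg y := by
    have := cneg_anti hy1; rwa [cneg_ox] at this
  apply le_antisymm
  · -- zx y ≤ zx x : uses h2
    have hx : y * x ≤ y := by
      conv_rhs => rw [← h2]
      exact cmul_mono_right y le_sup_left
    have hnx : y * neg x ≤ y := by
      conv_rhs => rw [← h2]
      exact cmul_mono_right y le_sup_right
    refine le_inf ?_ ?_
    · rw [← cmul_neg_self, cle_iff_neg, mul_right_comm]
      rw [cle_iff_neg] at hnx
      exact hnx
    · rw [← cmul_neg_self, cle_iff_neg, cneg_neg, mul_right_comm]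
      rw [cle_iff_neg] at hx
      exact hx
  · -- zx x ≤ zx y
    calc zx x = zx x * zx x := (idem _).symm
      _ ≤ y * neg y := le_trans (cmul_mono_left h0y _) (cmul_mono_right y h0ny)
      _ = zx y := cmul_neg_self y

lemma cox_eq {x y : α} (h1 : zx x * y = zx x) (h2 : y * ox x = y) :
    ox y = ox x := by
  rw [← cneg_zx, ← cneg_zx x, czx_eq h1 h2]

end CIdInRL

open CIdInRL in
theorem stmt7 {α : Type*} [CIdInRL α] (x : α) :
    (mleq (zx x) x ∧ mleq x (ox x)) ∧
    ∀ y : α, (mleq (zx x) y ∧ mleq y (ox x)) →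
      ∀ z : α, ((mleq (zx y) z ∧ mleq z (ox y)) ↔ (mleq (zx x) z ∧ mleq z (ox x))) := by
  refine ⟨⟨czx_mleq x, cmleq_ox x⟩, ?_⟩
  rintro y ⟨h1, h2⟩ z
  rw [czx_eq h1 h2, cox_eq h1 h2]
end

section
/- In a commutative idempotent involutive residuated lattice, for every negative element a (a ≤ 1) and every x, the following are equivalent: (i) a ≤ x ≤ a → 1; (ii) a ≤ x ≤ 1_a; (iii) a · x = a. -/
namespace CIdInRL

variable {α : Type*} [CIdInRL α]

private lemma mul_mono_r (z : α) {x y : α} (h : x ≤ y) : z * x ≤ z * y :=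
  (residuation z x (z * y)).mpr (h.trans ((residuation z y (z * y)).mp le_rfl))

private lemma mul_mono {x y z w : α} (h1 : x ≤ y) (h2 : z ≤ w) : x * z ≤ y * w := by
  calc x * z ≤ x * w := mul_mono_r x h2
    _ = w * x := mul_comm x w
    _ ≤ w * y := mul_mono_r w h1
    _ = y * w := mul_comm w y

private lemma le_neg_of {s t : α} (h : s * t ≤ 0) : t ≤ neg s :=
  (residuation s t 0).mp h

private lemma mul_neg_le_zero (t : α) : t * neg t ≤ (0 : α) :=
  (residuation t (neg t) 0).mpr le_rfl

private lemma negneg (t : α) : neg (neg t) = t := involutive t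

private lemma neg_antitone {t u : α} (h : t ≤ u) : neg u ≤ neg t :=
  (residuation t (neg u) 0).mp <| by
    calc t * neg u ≤ u * neg u := mul_mono h le_rfl
      _ ≤ 0 := mul_neg_le_zero u

/-- a·¬a ≤ a -/
private lemma mul_neg_le_self (a : α) : a * neg a ≤ a := by
  have h : (a * neg a) * neg a ≤ 0 := by
    calc (a * neg a) * neg a = a * (neg a * neg a) := mul_assoc _ _ _
      _ = a * neg a := by rw [idem]
      _ ≤ 0 := mul_neg_le_zero a
  have := le_neg_of (s := neg a) (t := a * neg a) (by rwa [mul_comm] at h)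
  rwa [negneg] at this

end CIdInRL

open CIdInRL in
theorem stmt11 {α : Type*} [CIdInRL α] (a x : α) (ha : a ≤ 1) :
    ((a ≤ x ∧ x ≤ arrow a 1) ↔ (a ≤ x ∧ x ≤ ox a)) ∧
    ((a ≤ x ∧ x ≤ ox a) ↔ a * x = a) := by
  -- (iii) → a ≤ x
  have hiii_le : ∀ _ : a * x = a, a ≤ x := fun h => by
    calc a = a * x := h.symm
      _ = x * a := mul_comm a x
      _ ≤ x * 1 := mul_mono_r x ha
      _ = x := mul_one x
  -- (ii) ↔ (iii)
  have h23 : (a ≤ x ∧ x ≤ ox a) ↔ a * x = a := by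
    constructor
    · rintro ⟨hax, hx⟩
      have hub : a * x ≤ a := by
        calc a * x ≤ a * ox a := mul_mono_r a hx
          _ ≤ a := by
            refine (residuation a (ox a) a).mpr (sup_le ?_ ?_)
            · exact (residuation a a a).mp (le_of_eq (idem a))
            · exact (residuation a (neg a) a).mp (mul_neg_le_self a)
      have hlb : a ≤ a * x := by
        calc a = a * a := (idem a).symm
          _ ≤ a * x := mul_mono_r a hax
      exact le_antisymm hub hlb
    · intro h
      refine ⟨hiii_le h, ?_⟩
      set s : α := a ⊓ neg a with hs
      have hxs : x * s ≤ 0 := by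
        calc x * s = x * (s * s) := by rw [idem]
          _ ≤ x * (a * neg a) := mul_mono_r x (mul_mono inf_le_left inf_le_right)
          _ = (x * a) * neg a := (mul_assoc _ _ _).symm
          _ = a * neg a := by rw [mul_comm x a, h]
          _ ≤ 0 := mul_neg_le_zero a
      have hx_negs : x ≤ neg s := le_neg_of (by rwa [mul_comm s x])
      have hnegs : neg s ≤ ox a := by
        have h1 : neg (ox a) ≤ s := by
          refine le_inf ?_ ?_
          · have := neg_antitone (le_sup_right : neg a ≤ ox a)
            rwa [negneg] at this
          · exact neg_antitone (le_sup_left : a ≤ ox a)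
        have := neg_antitone h1
        rwa [negneg] at this
      exact hx_negs.trans hnegs
  -- (i) ↔ (iii)
  have h13 : (a ≤ x ∧ x ≤ arrow a 1) ↔ a * x = a := by
    constructor
    · rintro ⟨hax, hx1⟩
      have h4 : a * x ≤ 1 := (residuation a x 1).mpr hx1
      have hub : a * x ≤ a := by
        calc a * x = (a * a) * x := by rw [idem]
          _ = a * (a * x) := mul_assoc _ _ _
          _ ≤ a * 1 := mul_mono_r a h4
          _ = a := mul_one a
      have hlb : a ≤ a * x := by
        calc a = a * a := (idem a).symm
          _ ≤ a * x := mul_mono_r a hax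
      exact le_antisymm hub hlb
    · intro h
      exact ⟨hiii_le h, (residuation a x 1).mp (by rw [h]; exact ha)⟩
  exact ⟨h13.trans h23.symm, h23⟩
end
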